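/- arXiv:2405.01519 — 3 statements merged into one kernel-verified Lean document; each statement's English description precedes it below -/
import Mathlib

section
/- Let φ: ℝ → ℝ be a nonnegative integrable function supported in [-1,1] that is symmetric (φ(-s) = φ(s)). Then ∫₀¹∫₀¹ φ(s-u) ds du + 2·∫₀¹∫₀¹ φ(s+u) ds du = ∫_{-1}^{1} φ(s) ds = ‖φ‖₁. -/
open MeasureTheory

/-- For a nonnegative integrable `φ : ℝ → ℝ` supported in `[-1,1]` and
symmetric about `0`, the diagonal block plus twice the off-diagonal block of double
integrals over the unit square equals `∫_{-1}^1 φ`, which equals `‖φ‖₁ = ∫ φ`. -/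
theorem stmt0 (φ : ℝ → ℝ) (hnn : ∀ x, 0 ≤ φ x) (hint : Integrable φ)
    (hsupp : ∀ x : ℝ, 1 ≤ |x| → φ x = 0) (hsymm : ∀ x, φ (-x) = φ x) :
    ((∫ s in (0:ℝ)..1, ∫ u in (0:ℝ)..1, φ (s - u)) +
      2 * ∫ s in (0:ℝ)..1, ∫ u in (0:ℝ)..1, φ (s + u)) = (∫ s in (-1:ℝ)..1, φ s) ∧
    (∫ s in (-1:ℝ)..1, φ s) = ∫ s, φ s := by
  set F : ℝ → ℝ := fun x => ∫ t in (0:ℝ)..x, φ t with hF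
  have hII : ∀ a b : ℝ, IntervalIntegrable φ volume a b := fun a b =>
    hint.intervalIntegrable
  have hFc : Continuous F := hint.continuous_primitive 0
  -- inner integrals
  have hA : ∀ s : ℝ, (∫ u in (0:ℝ)..1, φ (s - u)) = F s - F (s - 1) := by
    intro s
    rw [intervalIntegral.integral_comp_sub_left φ s]
    simp only [sub_zero]
    rw [← intervalIntegral.integral_interval_sub_left (hII 0 s) (hII 0 (s - 1))]
  have hB : ∀ s : ℝ, (∫ u in (0:ℝ)..1, φ (s + u)) = F (s + 1) - F s := by
    intro s
    rw [intervalIntegral.integral_comp_add_left φ s]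
    simp only [add_zero]
    rw [← intervalIntegral.integral_interval_sub_left (hII 0 (s + 1)) (hII 0 s)]
  -- key pointwise simplifications on [0,1]
  have hF1 : ∀ s ∈ Set.uIcc (0:ℝ) 1, F (s + 1) = F 1 := by
    intro s hs
    rw [Set.uIcc_of_le (by norm_num : (0:ℝ) ≤ 1)] at hs
    have h0 : ∫ t in (1:ℝ)..(s + 1), φ t = 0 := by
      rw [intervalIntegral.integral_congr (g := fun _ => 0) ?_,
        intervalIntegral.integral_zero]
      intro x hx
      rw [Set.uIcc_of_le (by linarith [hs.1] : (1:ℝ) ≤ s + 1)] at hx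
      exact hsupp x (le_abs.2 (Or.inl hx.1))
    have := intervalIntegral.integral_add_adjacent_intervals (hII 0 1) (hII 1 (s + 1))
    simp only [hF]
    rw [← this, h0, add_zero]
  have hFneg : ∀ s : ℝ, F (s - 1) = -F (1 - s) := by
    intro s
    have h1 : (∫ t in (s - 1)..(0:ℝ), φ t) = ∫ t in (s-1)..(0:ℝ), φ (-t) := by
      refine intervalIntegral.integral_congr fun x _ => (hsymm x).symm
    have h2 : (∫ t in (s - 1)..(0:ℝ), φ (-t)) = ∫ t in (0:ℝ)..(1 - s), φ t := by
      rw [intervalIntegral.integral_comp_neg φ]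
      norm_num
    have h3 : (∫ t in (0:ℝ)..(s - 1), φ t) = -∫ t in (s - 1)..(0:ℝ), φ t := by
      rw [intervalIntegral.integral_symm]
    simp only [hF]
    rw [h3, h1, h2]
  constructor
  · -- main identity
    have hcont1 : Continuous fun s : ℝ => F s - F (s - 1) := by fun_prop
    have hcont2 : Continuous fun s : ℝ => F (s + 1) - F s := by fun_prop
    simp only [hA, hB]
    rw [show (2 : ℝ) * ∫ s in (0:ℝ)..1, (F (s + 1) - F s) =
        ∫ s in (0:ℝ)..1, 2 * (F (s + 1) - F s) by
      rw [← intervalIntegral.integral_const_mul]]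
    rw [← intervalIntegral.integral_add
        (hcont1.intervalIntegrable 0 1)
        ((show Continuous fun s : ℝ => 2 * (F (s + 1) - F s) from continuous_const.mul hcont2).intervalIntegrable 0 1)]
    have hptwise : ∀ s ∈ Set.uIcc (0:ℝ) 1,
        (F s - F (s - 1)) + 2 * (F (s + 1) - F s) = 2 * F 1 + (F (1 - s) - F s) := by
      intro s hs
      rw [hF1 s hs, hFneg s]
      ring
    rw [intervalIntegral.integral_congr hptwise]
    have hsplit : (∫ s in (0:ℝ)..1, (2 * F 1 + (F (1 - s) - F s))) =
        (∫ s in (0:ℝ)..1, (2 * F 1 : ℝ)) + ∫ s in (0:ℝ)..1, (F (1 - s) - F s) := by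
      refine intervalIntegral.integral_add
        (intervalIntegrable_const)
        (((by fun_prop : Continuous fun s : ℝ => F (1 - s) - F s)).intervalIntegrable 0 1)
    rw [hsplit]
    have hrefl : (∫ s in (0:ℝ)..1, (F (1 - s) - F s)) = 0 := by
      rw [intervalIntegral.integral_sub
        ((by fun_prop : Continuous fun s : ℝ => F (1 - s)).intervalIntegrable 0 1)
        (hFc.intervalIntegrable 0 1)]
      rw [intervalIntegral.integral_comp_sub_left F 1]
      norm_num
    rw [hrefl, add_zero]
    -- RHS: ∫_{-1}^1 φ = 2 * F 1
    have hsplitR : (∫ s in (-1:ℝ)..1, φ s) =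
        (∫ s in (-1:ℝ)..0, φ s) + ∫ s in (0:ℝ)..1, φ s :=
      (intervalIntegral.integral_add_adjacent_intervals (hII (-1) 0) (hII 0 1)).symm
    have hneg : (∫ s in (-1:ℝ)..0, φ s) = ∫ s in (0:ℝ)..1, φ s := by
      rw [intervalIntegral.integral_congr (g := fun t => φ (-t))
        (fun x _ => (hsymm x).symm), intervalIntegral.integral_comp_neg φ]
      norm_num
    rw [hsplitR, hneg]
    simp only [hF, intervalIntegral.integral_const, smul_eq_mul]
    ring
  · -- ∫_{-1}^1 φ = ∫ φ
    rw [intervalIntegral.integral_of_le (by norm_num : (-1:ℝ) ≤ 1)]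
    refine setIntegral_eq_integral_of_forall_compl_eq_zero fun x hx => ?_
    apply hsupp
    simp only [Set.mem_Ioc, not_and_or, not_lt, not_le] at hx
    rcases hx with h | h
    · exact le_abs.2 (Or.inr (by linarith))
    · exact le_abs.2 (Or.inl h.le)
end

section
/- Let μ be a probability kernel π(x, dy) on a measurable space S and suppose there exist constants A, B > 0 such that A·ν(E) ≤ π(x, E) ≤ B·ν(E) for all x ∈ S and all measurable E, where ν is a fixed probability measure. Let (X₀, X₁, ..., X_p) be a Markov chain with X₀ ∼ ν and transitions π. Then for any nonnegative measurable F on S^{p+1} and any 1 ≤ k ≤ p: A·E[F(X₀,...,X̃ₖ,...,X_p)] ≤ E[F(X₀,...,X_p)] ≤ B·E[F(X₀,...,X̃ₖ,...,X_p)], where on the left and right the chain is generated the same way except that at step k one samples X̃ₖ ∼ ν independently of the previous steps (and subsequent steps use π from X̃ₖ). -/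
open MeasureTheory ProbabilityTheory
open scoped ENNReal

/-- The law of a Markov chain `(X₀, X₁, ..., X_p)` on `S` with initial law `ν` and
(time-inhomogeneous) transition kernels `κ n` (governing the step from `X_n` to
`X_{n+1}`), as a measure on `Fin (p+1) → S`. -/
noncomputable def chainLaw {S : Type*} [MeasurableSpace S] (ν : Measure S)
    (κ : ℕ → ProbabilityTheory.Kernel S S) : (p : ℕ) → Measure (Fin (p + 1) → S)
  | 0 => ν.map (fun x => fun _ => x)
  | (p + 1) =>
      (chainLaw ν κ p).bind
        (fun xs => ((κ p) (xs (Fin.last p))).map (fun y => Fin.snoc xs y))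

section aux

variable {S : Type*} [MeasurableSpace S]

lemma measurable_snoc_pair {q : ℕ} :
    Measurable (fun z : (Fin (q + 1) → S) × S => (Fin.snoc z.1 z.2 : Fin (q + 1 + 1) → S)) := by
  apply measurable_pi_lambda
  intro i
  induction i using Fin.lastCases with
  | last => simpa using measurable_snd
  | cast j => simpa [Function.comp_def] using (measurable_pi_apply j).comp measurable_fst

lemma measurable_snoc_left {q : ℕ} (xs : Fin (q + 1) → S) :
    Measurable (fun y : S => (Fin.snoc xs y : Fin (q + 1 + 1) → S)) :=
  measurable_snoc_pair.comp (measurable_prodMk_left)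

lemma measurable_step (κ : ProbabilityTheory.Kernel S S) [ProbabilityTheory.IsSFiniteKernel κ]
    (q : ℕ) :
    Measurable (fun xs : Fin (q + 1) → S =>
      ((κ (xs (Fin.last q))).map (fun y => Fin.snoc xs y) :
        Measure (Fin (q + 1 + 1) → S))) := by
  apply Measure.measurable_of_measurable_coe
  intro s hs
  simp_rw [Measure.map_apply (measurable_snoc_left _) hs]
  have ht : MeasurableSet {z : (Fin (q + 1) → S) × S | (Fin.snoc z.1 z.2 : Fin (q+1+1) → S) ∈ s} :=
    measurable_snoc_pair hs
  have h := ProbabilityTheory.Kernel.measurable_kernel_prodMk_left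
    (κ := κ.comap (fun xs : Fin (q + 1) → S => xs (Fin.last q)) (measurable_pi_apply _)) ht
  simpa [ProbabilityTheory.Kernel.comap_apply, Set.preimage] using h

lemma chainLaw_succ (ν : Measure S) (κ : ℕ → ProbabilityTheory.Kernel S S) (q : ℕ) :
    chainLaw ν κ (q + 1) =
      (chainLaw ν κ q).bind
        (fun xs => ((κ q) (xs (Fin.last q))).map (fun y => Fin.snoc xs y)) := rfl

lemma chainLaw_congr (ν : Measure S) (κ κ' : ℕ → ProbabilityTheory.Kernel S S) (q : ℕ)
    (h : ∀ n < q, κ n = κ' n) : chainLaw ν κ q = chainLaw ν κ' q := by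
  induction q with
  | zero => rfl
  | succ q ih =>
    rw [chainLaw_succ, chainLaw_succ, ih (fun n hn => h n (hn.trans (Nat.lt_succ_self q))),
      h q (Nat.lt_succ_self q)]

lemma bind_mono_base {α β : Type*} [MeasurableSpace α] [MeasurableSpace β] (c d : ℝ≥0∞)
    (μ μ' : Measure α) (g : α → Measure β) (hg : Measurable g)
    (h : ∀ s, MeasurableSet s → c * μ s ≤ d * μ' s) :
    ∀ s, MeasurableSet s → c * (μ.bind g) s ≤ d * (μ'.bind g) s := by
  intro s hs
  rw [Measure.bind_apply hs hg.aemeasurable, Measure.bind_apply hs hg.aemeasurable, ← smul_eq_mul,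
    ← lintegral_smul_measure, ← smul_eq_mul, ← lintegral_smul_measure]
  refine lintegral_mono' (Measure.le_iff.mpr fun t ht => ?_) le_rfl
  simpa [smul_eq_mul] using h t ht

lemma bind_mono_kernel {α β : Type*} [MeasurableSpace α] [MeasurableSpace β] (c d : ℝ≥0∞)
    (μ : Measure α) (f g : α → Measure β) (hf : Measurable f) (hg : Measurable g)
    (h : ∀ x, ∀ s, MeasurableSet s → c * f x s ≤ d * g x s) :
    ∀ s, MeasurableSet s → c * (μ.bind f) s ≤ d * (μ.bind g) s := by
  intro s hs
  rw [Measure.bind_apply hs hf.aemeasurable, Measure.bind_apply hs hg.aemeasurable]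
  refine le_trans (le_of_eq (lintegral_const_mul c
      ((Measure.measurable_coe hs).comp hf)).symm)
    (le_trans (lintegral_mono fun x => h x s hs)
      (le_of_eq (lintegral_const_mul d ((Measure.measurable_coe hs).comp hg))))

end aux

/-- the two-sided Doeblin sandwich `A·ν ≤ π(x,·) ≤ B·ν` transfers to
expectations of nonnegative functionals of the Markov chain, when step `k`
(for `1 ≤ k ≤ p`) is resampled independently from `ν`. -/
theorem stmt4 {S : Type*} [MeasurableSpace S] (ν : Measure S) [IsProbabilityMeasure ν]
    (π : ProbabilityTheory.Kernel S S) [ProbabilityTheory.IsMarkovKernel π]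
    (A B : ℝ≥0∞) (hA : 0 < A) (hB : 0 < B)
    (hbound : ∀ x : S, ∀ E : Set S, MeasurableSet E →
      A * ν E ≤ π x E ∧ π x E ≤ B * ν E)
    (p k : ℕ) (hk1 : 1 ≤ k) (hkp : k ≤ p)
    (F : (Fin (p + 1) → S) → ℝ≥0∞) (hF : Measurable F) :
    A * (∫⁻ xs, F xs
          ∂(chainLaw ν (fun n => if n = k - 1 then ProbabilityTheory.Kernel.const S ν else π) p))
        ≤ ∫⁻ xs, F xs ∂(chainLaw ν (fun _ => π) p) ∧
    (∫⁻ xs, F xs ∂(chainLaw ν (fun _ => π) p))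
        ≤ B * ∫⁻ xs, F xs
          ∂(chainLaw ν (fun n => if n = k - 1 then ProbabilityTheory.Kernel.const S ν else π) p) := by
  obtain ⟨m, rfl⟩ : ∃ m, k = m + 1 := ⟨k - 1, (Nat.succ_pred_eq_of_pos hk1).symm⟩
  simp only [Nat.add_sub_cancel]
  set κ' : ℕ → ProbabilityTheory.Kernel S S :=
    fun n => if n = m then ProbabilityTheory.Kernel.const S ν else π with hκ'
  have key : ∀ q, m + 1 ≤ q →
      (∀ s, MeasurableSet s → A * chainLaw ν κ' q s ≤ 1 * chainLaw ν (fun _ => π) q s) ∧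
      (∀ s, MeasurableSet s → 1 * chainLaw ν (fun _ => π) q s ≤ B * chainLaw ν κ' q s) := by
    intro q hq
    induction q, hq using Nat.le_induction with
    | base =>
      have hagree : chainLaw ν κ' m = chainLaw ν (fun _ => π) m :=
        chainLaw_congr ν κ' (fun _ => π) m (fun n hn => by
          simp [hκ', Nat.ne_of_lt hn])
      have hm : κ' m = ProbabilityTheory.Kernel.const S ν := by simp [hκ']
      rw [chainLaw_succ, chainLaw_succ, hagree, hm]
      have hmeasg : Measurable (fun xs : Fin (m + 1) → S =>
          ((π (xs (Fin.last m))).map (fun y => Fin.snoc xs y) :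
            Measure (Fin (m + 1 + 1) → S))) := measurable_step π m
      have hmeasg' : Measurable (fun xs : Fin (m + 1) → S =>
          (((ProbabilityTheory.Kernel.const S ν) (xs (Fin.last m))).map (fun y => Fin.snoc xs y) :
            Measure (Fin (m + 1 + 1) → S))) :=
        measurable_step (ProbabilityTheory.Kernel.const S ν) m
      constructor
      · refine bind_mono_kernel A 1 _ _ _ hmeasg' hmeasg fun xs s hs => ?_
        rw [one_mul, Measure.map_apply (measurable_snoc_left _) hs,
          Measure.map_apply (measurable_snoc_left _) hs]
        simp only [ProbabilityTheory.Kernel.const_apply]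
        exact (hbound (xs (Fin.last m)) _ ((measurable_snoc_left xs) hs)).1
      · refine bind_mono_kernel 1 B _ _ _ hmeasg hmeasg' fun xs s hs => ?_
        rw [one_mul, Measure.map_apply (measurable_snoc_left _) hs,
          Measure.map_apply (measurable_snoc_left _) hs]
        simp only [ProbabilityTheory.Kernel.const_apply]
        exact (hbound (xs (Fin.last m)) _ ((measurable_snoc_left xs) hs)).2
    | succ q hq ih =>
      have hne : q ≠ m := by omega
      have hrw : κ' q = π := by simp [hκ', hne]
      rw [chainLaw_succ, chainLaw_succ, hrw]
      have hmeasg : Measurable (fun xs : Fin (q + 1) → S =>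
          ((π (xs (Fin.last q))).map (fun y => Fin.snoc xs y) :
            Measure (Fin (q + 1 + 1) → S))) := measurable_step π q
      exact ⟨bind_mono_base A 1 _ _ _ hmeasg ih.1, bind_mono_base 1 B _ _ _ hmeasg ih.2⟩
  obtain ⟨h1, h2⟩ := key p hkp
  constructor
  · calc A * ∫⁻ xs, F xs ∂(chainLaw ν κ' p)
        = ∫⁻ xs, F xs ∂(A • chainLaw ν κ' p) := by rw [lintegral_smul_measure, smul_eq_mul]
      _ ≤ ∫⁻ xs, F xs ∂(chainLaw ν (fun _ => π) p) := by
          refine lintegral_mono' (Measure.le_iff.mpr fun s hs => ?_) le_rfl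
          simpa [smul_eq_mul] using h1 s hs
  · calc ∫⁻ xs, F xs ∂(chainLaw ν (fun _ => π) p)
        ≤ ∫⁻ xs, F xs ∂(B • chainLaw ν κ' p) := by
          refine lintegral_mono' (Measure.le_iff.mpr fun s hs => ?_) le_rfl
          simpa [smul_eq_mul] using h2 s hs
      _ = B * ∫⁻ xs, F xs ∂(chainLaw ν κ' p) := by rw [lintegral_smul_measure, smul_eq_mul]
end

section
/- (Khas'minskii-type lemma for sums with 2-dependence.) Let (Dₖ)_{k=1}^{n} be nonnegative random variables adapted to a filtration (𝓕ₖ), with Dₖ ≤ δ almost surely for all k, and suppose η := sup over k₀ and conditioning of E[Σ_{k=k₀+3}^{n} Dₖ | 𝓕_{k₀}] ≤ η < 1 with η + 2δ < 1. Then E[∏_{k=1}^{n}(1 + Dₖ)] ≤ 1/(1 − η − 2δ). -/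
open MeasureTheory Finset

/-- Khas'minskii-type lemma for sums with 2-dependence. If
`0 ≤ Dₖ ≤ δ` a.s., the conditional expectations satisfy
`E[Σ_{k=k₀+3}^n Dₖ | 𝓕_{k₀}] ≤ η` a.s. for all `k₀`, and `η + 2δ < 1`, then
`E[∏_{k=1}^n (1 + Dₖ)] ≤ 1/(1 − η − 2δ)`. -/
theorem stmt11 {Ω : Type*} [m0 : MeasurableSpace Ω] (μ : Measure Ω)
    [IsProbabilityMeasure μ]
    (ℱ : Filtration ℕ m0) (n : ℕ) (D : ℕ → Ω → ℝ)
    (hadapted : Adapted ℱ D) (hint : ∀ k, Integrable (D k) μ)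
    (δ η : ℝ) (hδ : 0 ≤ δ)
    (hD : ∀ k, ∀ᵐ ω ∂μ, 0 ≤ D k ω ∧ D k ω ≤ δ)
    (hη : ∀ k₀ : ℕ, ∀ᵐ ω ∂μ,
      (μ[fun ω' => ∑ k ∈ Finset.Icc (k₀ + 3) n, D k ω' | ℱ k₀]) ω ≤ η)
    (hη1 : η < 1) (hηδ : η + 2 * δ < 1) :
    ∫ ω, ∏ k ∈ Finset.Icc 1 n, (1 + D k ω) ∂μ ≤ 1 / (1 - η - 2 * δ) := by
  classical
  have hDae : ∀ᵐ ω ∂μ, ∀ k, 0 ≤ D k ω ∧ D k ω ≤ δ := ae_all_iff.2 hD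
  -- η is nonnegative
  have hη0 : 0 ≤ η := by
    have h0 := hη n
    have h1 : (fun ω' => ∑ k ∈ Finset.Icc (n + 3) n, D k ω') = (0 : Ω → ℝ) := by
      funext ω'
      rw [Finset.Icc_eq_empty (by omega)]
      simp
    rw [h1, condExp_zero] at h0
    obtain ⟨ω, hω⟩ := h0.exists
    simpa using hω
  have hmeas : ∀ k, AEStronglyMeasurable (D k) μ := fun k => (hint k).1
  have hDbd : ∀ k, ∀ᵐ ω ∂μ, ‖D k ω‖ ≤ δ := by
    intro k
    filter_upwards [hD k] with ω h
    rw [Real.norm_eq_abs, abs_of_nonneg h.1]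
    exact h.2
  -- integrability of products
  have hprod_int : ∀ S : Finset ℕ, Integrable (fun ω => ∏ k ∈ S, D k ω) μ := by
    intro S
    induction S using Finset.induction_on with
    | empty => simpa using (integrable_const (1 : ℝ))
    | insert _ _ ha ih =>
      simp_rw [Finset.prod_insert ha]
      exact ih.bdd_mul (hmeas _) (hDbd _)
  have hprod_nonneg : ∀ S : Finset ℕ, ∀ᵐ ω ∂μ, 0 ≤ ∏ k ∈ S, D k ω := by
    intro S
    filter_upwards [hDae] with ω h
    exact Finset.prod_nonneg fun k _ => (h k).1
  have hprod_bdd : ∀ S : Finset ℕ, ∀ᵐ ω ∂μ, ‖∏ k ∈ S, D k ω‖ ≤ δ ^ S.card := by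
    intro S
    filter_upwards [hDae] with ω h
    rw [Real.norm_eq_abs, abs_of_nonneg (Finset.prod_nonneg fun k _ => (h k).1)]
    calc ∏ k ∈ S, D k ω ≤ ∏ k ∈ S, δ :=
          Finset.prod_le_prod (fun k _ => (h k).1) (fun k _ => (h k).2)
      _ = δ ^ S.card := by rw [Finset.prod_const]
  have hIprod_nonneg : ∀ S : Finset ℕ, 0 ≤ ∫ ω, ∏ k ∈ S, D k ω ∂μ := fun S =>
    integral_nonneg_of_ae (hprod_nonneg S)
  -- strong measurability of products w.r.t. the filtration
  have hsm : ∀ (S : Finset ℕ) (k₀ : ℕ), (∀ k ∈ S, k ≤ k₀) →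
      StronglyMeasurable[ℱ k₀] (fun ω => ∏ k ∈ S, D k ω) := by
    intro S k₀
    induction S using Finset.induction_on with
    | empty => intro _; simpa using stronglyMeasurable_const
    | @insert a S ha ih =>
      intro hS
      simp_rw [Finset.prod_insert ha]
      exact ((hadapted a).mono (ℱ.mono (hS a (Finset.mem_insert_self a S))) le_rfl).stronglyMeasurable.mul
        (ih fun k hk => hS k (Finset.mem_insert_of_mem hk))
  -- the key analytic step
  have key : ∀ S : Finset ℕ, S ⊆ Finset.Icc 1 n →
      ∑ m ∈ Finset.Ioc (S.sup id) n, ∫ ω, D m ω * ∏ k ∈ S, D k ω ∂μ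
        ≤ (η + 2 * δ) * ∫ ω, ∏ k ∈ S, D k ω ∂μ := by
    intro S hS
    set k₀ := S.sup id with hk₀
    set f : Ω → ℝ := fun ω => ∏ k ∈ S, D k ω with hf
    have hfint : Integrable f μ := hprod_int S
    have hI0 : 0 ≤ ∫ ω, f ω ∂μ := hIprod_nonneg S
    have hint_mul : ∀ m, Integrable (fun ω => D m ω * f ω) μ := fun m =>
      hfint.bdd_mul (hmeas m) (hDbd m)
    have hsplit : Finset.Ioc k₀ n = Finset.Ioc k₀ (min (k₀ + 2) n) ∪ Finset.Icc (k₀ + 3) n := by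
      ext x
      simp only [Finset.mem_union, Finset.mem_Ioc, Finset.mem_Icc, lt_min_iff, le_min_iff]
      omega
    have hdisj : Disjoint (Finset.Ioc k₀ (min (k₀ + 2) n)) (Finset.Icc (k₀ + 3) n) := by
      rw [Finset.disjoint_left]
      intro x hx hx'
      simp only [Finset.mem_Ioc, Finset.mem_Icc, le_min_iff] at hx hx'
      omega
    rw [hsplit, Finset.sum_union hdisj]
    -- part A : the two terms right after k₀
    have hA : ∑ m ∈ Finset.Ioc k₀ (min (k₀ + 2) n), ∫ ω, D m ω * f ω ∂μ
        ≤ 2 * δ * ∫ ω, f ω ∂μ := by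
      have hterm : ∀ m ∈ Finset.Ioc k₀ (min (k₀ + 2) n),
          ∫ ω, D m ω * f ω ∂μ ≤ δ * ∫ ω, f ω ∂μ := by
        intro m _
        rw [← integral_const_mul]
        refine integral_mono_ae (hint_mul m) (hfint.const_mul δ) ?_
        filter_upwards [hD m, hprod_nonneg S] with ω h hf0
        exact mul_le_mul_of_nonneg_right h.2 hf0
      calc ∑ m ∈ Finset.Ioc k₀ (min (k₀ + 2) n), ∫ ω, D m ω * f ω ∂μ
          ≤ ∑ _m ∈ Finset.Ioc k₀ (min (k₀ + 2) n), δ * ∫ ω, f ω ∂μ :=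
            Finset.sum_le_sum hterm
        _ = ((Finset.Ioc k₀ (min (k₀ + 2) n)).card : ℝ) * (δ * ∫ ω, f ω ∂μ) := by
            rw [Finset.sum_const, nsmul_eq_mul]
        _ ≤ 2 * (δ * ∫ ω, f ω ∂μ) := by
            refine mul_le_mul_of_nonneg_right ?_ (mul_nonneg hδ hI0)
            have : (Finset.Ioc k₀ (min (k₀ + 2) n)).card ≤ 2 := by
              rw [Nat.card_Ioc]; omega
            exact_mod_cast this
        _ = 2 * δ * ∫ ω, f ω ∂μ := by ring
    -- part B : the conditional-expectation part
    have hB : ∑ m ∈ Finset.Icc (k₀ + 3) n, ∫ ω, D m ω * f ω ∂μ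
        ≤ η * ∫ ω, f ω ∂μ := by
      set g : Ω → ℝ := fun ω => ∑ m ∈ Finset.Icc (k₀ + 3) n, D m ω with hg
      have hgint : Integrable g μ := integrable_finset_sum _ fun m _ => hint m
      have hfg_int : Integrable (f * g) μ := by
        have := hgint.bdd_mul (hfint.1) (hprod_bdd S)
        exact this
      have hfsm : StronglyMeasurable[ℱ k₀] f :=
        hsm S k₀ fun k hk => Finset.le_sup (f := id) hk
      have h1 : ∑ m ∈ Finset.Icc (k₀ + 3) n, ∫ ω, D m ω * f ω ∂μ
          = ∫ ω, (f * g) ω ∂μ := by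
        rw [← integral_finset_sum _ fun m _ => hint_mul m]
        congr 1
        funext ω
        simp only [Pi.mul_apply, hg, Finset.sum_mul]
        rw [Finset.mul_sum]
        exact Finset.sum_congr rfl fun m _ => mul_comm _ _
      have h2 : ∫ ω, (f * g) ω ∂μ = ∫ ω, (μ[f * g | ℱ k₀]) ω ∂μ :=
        (integral_condExp (ℱ.le k₀)).symm
      have h3 : μ[f * g | ℱ k₀] =ᵐ[μ] f * μ[g | ℱ k₀] :=
        condExp_mul_of_stronglyMeasurable_left hfsm hfg_int hgint
      have h4 : ∫ ω, (μ[f * g | ℱ k₀]) ω ∂μ = ∫ ω, f ω * (μ[g | ℱ k₀]) ω ∂μ :=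
        integral_congr_ae h3
      have h5 : ∫ ω, f ω * (μ[g | ℱ k₀]) ω ∂μ ≤ ∫ ω, f ω * η ∂μ := by
        refine integral_mono_ae ?_ (hfint.mul_const η) ?_
        · exact (integrable_condExp).bdd_mul hfint.1 (hprod_bdd S)
        · filter_upwards [hprod_nonneg S, hη k₀] with ω h0 hce
          exact mul_le_mul_of_nonneg_left hce h0
      have h6 : ∫ ω, f ω * η ∂μ = η * ∫ ω, f ω ∂μ := by
        rw [integral_mul_const]; ring
      rw [h1, h2, h4]
      rw [← h6]
      exact h5
    nlinarith [hA, hB]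
  -- the main induction on the size of the subsets
  have main : ∀ p : ℕ,
      ∑ S ∈ Finset.powersetCard p (Finset.Icc 1 n), ∫ ω, ∏ k ∈ S, D k ω ∂μ
        ≤ (η + 2 * δ) ^ p := by
    intro p
    induction p with
    | zero => simp
    | succ p ih =>
      have hre : ∑ S ∈ Finset.powersetCard (p + 1) (Finset.Icc 1 n), ∫ ω, ∏ k ∈ S, D k ω ∂μ
          = ∑ S' ∈ Finset.powersetCard p (Finset.Icc 1 n),
              ∑ m ∈ Finset.Ioc (S'.sup id) n, ∫ ω, D m ω * ∏ k ∈ S', D k ω ∂μ := by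
        rw [Finset.sum_sigma']
        refine Finset.sum_nbij' (fun S => (⟨S.erase (S.sup id), S.sup id⟩ :
            (_ : Finset ℕ) × ℕ)) (fun x => insert x.2 x.1) ?_ ?_ ?_ ?_ ?_
        · -- forward membership
          intro S hS
          rw [Finset.mem_powersetCard] at hS
          have hne : S.Nonempty := by
            rw [← Finset.card_pos, hS.2]; omega
          have hMmem : S.sup id ∈ S := by
            obtain ⟨i, hi, hEq⟩ := Finset.exists_mem_eq_sup S hne id
            rw [hEq]; exact hi
          have hM1 : 1 ≤ S.sup id ∧ S.sup id ≤ n := by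
            have := hS.1 hMmem
            rw [Finset.mem_Icc] at this
            exact this
          rw [Finset.mem_sigma]
          constructor
          · rw [Finset.mem_powersetCard]
            exact ⟨(Finset.erase_subset _ _).trans hS.1,
              by rw [Finset.card_erase_of_mem hMmem, hS.2]; omega⟩
          · rw [Finset.mem_Ioc]
            refine ⟨?_, hM1.2⟩
            rw [Finset.sup_lt_iff (by rw [Nat.bot_eq_zero]; omega : (⊥ : ℕ) < S.sup id)]
            intro b hb
            rw [Finset.mem_erase] at hb
            exact lt_of_le_of_ne (Finset.le_sup (f := id) hb.2) hb.1
        · -- backward membership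
          intro x hx
          rw [Finset.mem_sigma] at hx
          obtain ⟨hx1, hx2⟩ := hx
          rw [Finset.mem_powersetCard] at hx1
          rw [Finset.mem_Ioc] at hx2
          have hnotmem : x.2 ∉ x.1 := fun hmem =>
            absurd (Finset.le_sup (f := id) hmem) (not_le.2 hx2.1)
          rw [Finset.mem_powersetCard]
          constructor
          · intro y hy
            rcases Finset.mem_insert.1 hy with rfl | hy
            · rw [Finset.mem_Icc]; omega
            · exact hx1.1 hy
          · rw [Finset.card_insert_of_notMem hnotmem, hx1.2]
        · -- left inverse
          intro S hS
          rw [Finset.mem_powersetCard] at hS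
          have hne : S.Nonempty := by
            rw [← Finset.card_pos, hS.2]; omega
          have hMmem : S.sup id ∈ S := by
            obtain ⟨i, hi, hEq⟩ := Finset.exists_mem_eq_sup S hne id
            rw [hEq]; exact hi
          exact Finset.insert_erase hMmem
        · -- right inverse
          intro x hx
          rw [Finset.mem_sigma] at hx
          obtain ⟨hx1, hx2⟩ := hx
          rw [Finset.mem_Ioc] at hx2
          have hle : x.1.sup id ≤ x.2 := le_of_lt hx2.1
          have hnotmem : x.2 ∉ x.1 := fun hmem =>
            absurd (Finset.le_sup (f := id) hmem) (not_le.2 hx2.1)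
          have hsup : (insert x.2 x.1).sup id = x.2 := by
            refine le_antisymm (Finset.sup_le fun b hb => ?_) (Finset.le_sup (f := id)
              (Finset.mem_insert_self _ _))
            rcases Finset.mem_insert.1 hb with rfl | hb
            · exact le_rfl
            · exact (Finset.le_sup (f := id) hb).trans hle
          have h1 : (insert x.2 x.1).erase ((insert x.2 x.1).sup id) = x.1 := by
            rw [hsup, Finset.erase_insert hnotmem]
          exact Sigma.ext h1 (heq_of_eq hsup)
        · -- values agree
          intro S hS
          rw [Finset.mem_powersetCard] at hS
          have hne : S.Nonempty := by
            rw [← Finset.card_pos, hS.2]; omega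
          have hMmem : S.sup id ∈ S := by
            obtain ⟨i, hi, hEq⟩ := Finset.exists_mem_eq_sup S hne id
            rw [hEq]; exact hi
          dsimp only
          congr 1
          funext ω
          exact (Finset.mul_prod_erase S (fun k => D k ω) hMmem).symm
      rw [hre]
      have hstep : ∑ S' ∈ Finset.powersetCard p (Finset.Icc 1 n),
          ∑ m ∈ Finset.Ioc (S'.sup id) n, ∫ ω, D m ω * ∏ k ∈ S', D k ω ∂μ
            ≤ ∑ S' ∈ Finset.powersetCard p (Finset.Icc 1 n),
                (η + 2 * δ) * ∫ ω, ∏ k ∈ S', D k ω ∂μ := by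
        refine Finset.sum_le_sum fun S' hS' => ?_
        exact key S' (Finset.mem_powersetCard.1 hS').1
      refine hstep.trans ?_
      rw [← Finset.mul_sum, pow_succ, mul_comm ((η + 2 * δ) ^ p)]
      exact mul_le_mul_of_nonneg_left ih (by linarith)
  -- expand the product and sum up
  have hexpand : ∫ ω, ∏ k ∈ Finset.Icc 1 n, (1 + D k ω) ∂μ
      = ∑ S ∈ (Finset.Icc 1 n).powerset, ∫ ω, ∏ k ∈ S, D k ω ∂μ := by
    have h1 : ∀ ω, ∏ k ∈ Finset.Icc 1 n, (1 + D k ω)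
        = ∑ S ∈ (Finset.Icc 1 n).powerset, ∏ k ∈ S, D k ω := by
      intro ω
      simp_rw [add_comm (1 : ℝ)]
      rw [Finset.prod_add]
      simp
    simp_rw [h1]
    exact integral_finset_sum _ fun S _ => hprod_int S
  rw [hexpand, Finset.sum_powerset]
  have hcard : (Finset.Icc 1 n).card = n := by rw [Nat.card_Icc]; omega
  rw [hcard]
  have hgeom : ∑ j ∈ Finset.range (n + 1),
      ∑ S ∈ Finset.powersetCard j (Finset.Icc 1 n), ∫ ω, ∏ k ∈ S, D k ω ∂μ
        ≤ ∑ j ∈ Finset.range (n + 1), (η + 2 * δ) ^ j :=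
    Finset.sum_le_sum fun j _ => main j
  refine hgeom.trans ?_
  -- geometric series bound
  have hx0 : 0 ≤ η + 2 * δ := by linarith
  have hx1 : η + 2 * δ < 1 := hηδ
  have h1x : 0 < 1 - η - 2 * δ := by linarith
  rw [le_div_iff₀ h1x]
  have hmul := geom_sum_mul (η + 2 * δ) (n + 1)
  have hpow : 0 ≤ (η + 2 * δ) ^ (n + 1) := pow_nonneg hx0 _
  nlinarith [hmul]
end
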